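/- Quantitative bounds on the linearized coefficients for semiconvex solutions: let K > 0. There exist Λ(n,K), c(n,K) > 0 and C(n,K) such that for every λ ∈ ℝⁿ with λ₁ ≥ λ₂ ≥ ⋯ ≥ λₙ ≥ −K, σ₂(λ) = 1, σ₁(λ) > 0, and λ₁ ≥ Λ(n,K), one has c(n,K) ≤ λ₁(σ₁ − λ₁) ≤ C(n,K), and for every k ≥ 2, c(n,K) ≤ (σ₁ − λ_k)/λ₁ ≤ C(n,K). -/
import Mathlib

set_option maxHeartbeats 1000000

private lemma sigma2_aux_M (nR K : ℝ) (hnR : 2 ≤ nR) (hK : 0 < K) :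
    2 ≤ (2*nR^2 + 2*nR + 1)*K + 2 ∧ K ≤ (2*nR^2 + 2*nR + 1)*K + 2 ∧
      (nR-1)*K + nR^2*K + 2 ≤ (2*nR^2 + 2*nR + 1)*K + 2 := by
  refine ⟨by nlinarith, by nlinarith, by nlinarith⟩

private lemma sigma2_aux_nK (nR K M : ℝ) (hnR : 2 ≤ nR) (hK : 0 < K) :
    nR*K ≤ 4*nR^2*(M^2+K^2+1) := by
  nlinarith [sq_nonneg (nR*K - nR), sq_nonneg M,
    mul_nonneg (by nlinarith : (0:ℝ) ≤ 8*nR^2 - nR) hK.le]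

private lemma sigma2_aux_nM (nR K M a : ℝ) (hnR : 2 ≤ nR) (hK : 0 < K) (hM2 : 2 ≤ M)
    (hΛ : 4*nR^2*(M^2+K^2+1) ≤ a) : nR*M ≤ a := by
  have h : 2*nR*M ≤ 4*nR^2*(M^2+K^2+1) := by
    nlinarith [sq_nonneg K, sq_nonneg (2*nR*M - 1)]
  nlinarith

private lemma sigma2_aux_term (K S x : ℝ) (hK : 0 < K) (hS : 0 < S) (hx : -K ≤ x)
    (hSx : x ≤ 0 ∨ 0 ≤ S - x) : -(K*(S+K)) ≤ x*(S-x) := by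
  rcases hSx with h | h
  · nlinarith
  · rcases le_or_gt x 0 with h' | h'
    · nlinarith
    · nlinarith

private lemma sigma2_aux_contr (nR K M a S b : ℝ) (hnR : 2 ≤ nR) (hK : 0 < K)
    (hM2 : 2 ≤ M) (hMK : K ≤ M) (hMkey : (nR-1)*K + nR^2*K + 2 ≤ M)
    (hΛ : 4*nR^2*(M^2+K^2+1) ≤ a) (hpos : 0 < S) (hS_ub : S ≤ nR*a)
    (hs_lb : -((nR-1)*K) ≤ S - a) (hS1 : a - (nR-2)*K ≤ S - b) (hb : M < b)
    (hbig : (nR-2) * (-(K*(S+K))) ≤ 2 - a*(S-a) - b*(S-b)) : False := by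
  have ha_pos : 0 < a := by nlinarith [sq_nonneg M, sq_nonneg K]
  have haK : (nR-2)*K ≤ a := by nlinarith [sigma2_aux_nK nR K M hnR hK]
  have h1 : -((nR-1)*K)*a ≤ a*(S-a) := by nlinarith
  have hS1pos : 0 ≤ a - (nR-2)*K := by linarith
  have h2 : M * (a - (nR-2)*K) ≤ b * (S - b) := by nlinarith
  have h3 : (nR-2)*(K*(S+K)) ≤ nR^2*K*a + nR*K^2 := by nlinarith
  have h5 : 2*a ≤ 2 + M*nR*K + nR*K^2 := by nlinarith [mul_pos ha_pos hK]
  nlinarith [mul_le_mul_of_nonneg_left hMK hK.le,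
    sq_nonneg (nR*M - 1), sq_nonneg (nR*K - 1), mul_pos ha_pos hK]

private lemma sigma2_aux_low (nR K M a S t : ℝ) (hnR : 2 ≤ nR) (hK : 0 < K)
    (hM2 : 2 ≤ M) (hMK : K ≤ M) (hΛ : 4*nR^2*(M^2+K^2+1) ≤ a)
    (hs_lb : -((nR-1)*K) ≤ S - a) (hs_ub : S - a ≤ (nR-1)*M)
    (ht0 : 0 ≤ t) (ht_ub : t ≤ (nR-1)*M^2)
    (hmain : 2*a*(S-a) + (S-a)^2 - t = 2) :
    1/2 ≤ a*(S-a) ∧ a*(S-a) ≤ nR*M^2 + 2 := by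
  have ha_pos : 0 < a := by nlinarith [sq_nonneg M, sq_nonneg K]
  constructor
  · rcases le_or_gt (S - a) (-1) with hs | hs
    · exfalso
      have h1 : a * (S-a) ≤ -a := by nlinarith
      have h2 : 1 - (S-a)^2/2 ≤ a*(S-a) := by nlinarith
      have hsK : -((nR-1)*M) ≤ S-a := by nlinarith
      have hssq : (S-a)^2 ≤ ((nR-1)*M)^2 := by
        nlinarith [mul_nonneg (by linarith : (0:ℝ) ≤ (nR-1)*M + (S-a))
          (by nlinarith : (0:ℝ) ≤ (nR-1)*M - (S-a))]
      nlinarith [sq_nonneg M, sq_nonneg K, sq_nonneg (nR*M)]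
    rcases le_or_gt (S - a) 1 with hs1 | hs1
    · nlinarith
    · nlinarith [sq_nonneg M, sq_nonneg K]
  · nlinarith [sq_nonneg (S-a), sq_nonneg M]

private lemma sigma2_aux_part2 (nR K M a S x : ℝ) (hnR : 2 ≤ nR) (hK : 0 < K)
    (hM2 : 2 ≤ M) (hMK : K ≤ M) (hΛ : 4*nR^2*(M^2+K^2+1) ≤ a)
    (hs_lb : -((nR-1)*K) ≤ S - a) (hs_ub : S - a ≤ (nR-1)*M)
    (hx_lb : -M ≤ x) (hx_ub : x ≤ M) :
    1/2 ≤ (S - x)/a ∧ (S - x)/a ≤ nR*M^2 + 2 := by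
  have ha_pos : 0 < a := by nlinarith [sq_nonneg M, sq_nonneg K]
  have hnM : nR*M ≤ a := sigma2_aux_nM nR K M a hnR hK hM2 hΛ
  have hsM : -((nR-1)*M) ≤ S - a := by nlinarith
  constructor
  · rw [le_div_iff₀ ha_pos]
    nlinarith
  · rw [div_le_iff₀ ha_pos]
    nlinarith [sq_nonneg M, mul_pos ha_pos (by nlinarith : (0:ℝ) < nR*M^2)]

/-- Quantitative bounds on the linearized coefficients for semiconvex lambda with
sigma_2 = 1 and a large top eigenvalue. -/
theorem sigma2_linearized_coefficient_bounds
    (n : ℕ) (hn : 2 ≤ n) (K : ℝ) (hK : 0 < K) :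
    ∃ (Λ c C : ℝ), 0 < Λ ∧ 0 < c ∧
      ∀ l : Fin n → ℝ,
        (∀ i j : Fin n, i ≤ j → l j ≤ l i) →
        -K ≤ l ⟨n - 1, by omega⟩ →
        ((∑ i, l i) ^ 2 - ∑ i, (l i) ^ 2) / 2 = 1 →
        0 < ∑ i, l i →
        Λ ≤ l ⟨0, by omega⟩ →
        (c ≤ l ⟨0, by omega⟩ * ((∑ i, l i) - l ⟨0, by omega⟩) ∧
          l ⟨0, by omega⟩ * ((∑ i, l i) - l ⟨0, by omega⟩) ≤ C) ∧
        ∀ k : Fin n, 1 ≤ (k : ℕ) →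
          c ≤ ((∑ i, l i) - l k) / l ⟨0, by omega⟩ ∧
          ((∑ i, l i) - l k) / l ⟨0, by omega⟩ ≤ C := by
  have hnR : (2:ℝ) ≤ (n:ℝ) := by exact_mod_cast hn
  set M : ℝ := (2*(n:ℝ)^2 + 2*(n:ℝ) + 1)*K + 2 with hMdef
  obtain ⟨hM2, hMK, hMkey⟩ := sigma2_aux_M (n:ℝ) K hnR hK
  rw [← hMdef] at hM2 hMK hMkey
  clear_value M
  clear hMdef
  refine ⟨4*(n:ℝ)^2*(M^2 + K^2 + 1), 1/2, (n:ℝ)*M^2 + 2, by positivity, by norm_num, ?_⟩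
  intro l hmono hbot hsig hpos hΛ
  set i0 : Fin n := ⟨0, by omega⟩ with hi0
  set i1 : Fin n := ⟨1, by omega⟩ with hi1
  set iN : Fin n := ⟨n-1, by omega⟩ with hiN
  set a := l i0 with ha
  set S := ∑ i, l i with hSdef
  set T := ∑ i, (l i)^2 with hTdef
  have ha_pos : 0 < a := lt_of_lt_of_le (by positivity) hΛ
  have hl0 : ∀ i, l i ≤ a := fun i => hmono i0 i (by simp [hi0, Fin.le_def])
  have hlK : ∀ i, -K ≤ l i := fun i =>
    le_trans hbot (hmono i iN (by simp only [hiN, Fin.le_def]; omega))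
  have hl1 : ∀ i : Fin n, i ≠ i0 → l i ≤ l i1 := by
    intro i hi
    refine hmono i1 i ?_
    have : (i:ℕ) ≠ 0 := by simpa [hi0, Fin.ext_iff] using hi
    simp only [hi1, Fin.le_def]; omega
  have hST : S^2 - T = 2 := by linarith
  have hkey : ∑ i, l i * (S - l i) = 2 := by
    have h1 : ∑ i, (l i * S - (l i)^2) = (∑ i, l i) * S - ∑ i, (l i)^2 := by
      rw [Finset.sum_sub_distrib, ← Finset.sum_mul]
    calc ∑ i, l i * (S - l i) = ∑ i, (l i * S - (l i)^2) :=
          Finset.sum_congr rfl fun i _ => by ring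
      _ = (∑ i, l i) * S - ∑ i, (l i)^2 := h1
      _ = S * S - T := by rw [← hSdef, ← hTdef]
      _ = 2 := by nlinarith [hST]
  clear_value a S T
  have hsum_erase : ∑ i ∈ Finset.univ.erase i0, l i = S - a := by
    rw [Finset.sum_erase_eq_sub (Finset.mem_univ i0), ← hSdef, ← ha]
  have hsq_erase : ∑ i ∈ Finset.univ.erase i0, (l i)^2 = T - a^2 := by
    rw [Finset.sum_erase_eq_sub (Finset.mem_univ i0), ← hTdef, ← ha]
  have hcard1 : (Finset.univ.erase i0).card = n - 1 := by
    rw [Finset.card_erase_of_mem (Finset.mem_univ i0), Finset.card_univ, Fintype.card_fin]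
  have hcast1 : ((n - 1 : ℕ) : ℝ) = (n:ℝ) - 1 := by
    rw [Nat.cast_sub (by omega)]; norm_num
  have hcast2 : ((n - 2 : ℕ) : ℝ) = (n:ℝ) - 2 := by
    rw [Nat.cast_sub (by omega)]; norm_num
  have hs_lb : -(((n:ℝ) - 1)*K) ≤ S - a := by
    have h := Finset.card_nsmul_le_sum (Finset.univ.erase i0) l (-K) (fun i _ => hlK i)
    rw [hcard1, hsum_erase, nsmul_eq_mul, hcast1] at h
    linarith
  have hsub : ∀ i : Fin n, i ≠ i0 → a - ((n:ℝ)-2)*K ≤ S - l i := by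
    intro i hi
    have h1 : ∑ j ∈ Finset.univ.erase i, l j = S - l i := by
      rw [Finset.sum_erase_eq_sub (Finset.mem_univ i), ← hSdef]
    have hmem : i0 ∈ Finset.univ.erase i := Finset.mem_erase.2 ⟨Ne.symm hi, Finset.mem_univ _⟩
    have h2 : ∑ j ∈ (Finset.univ.erase i).erase i0, l j = (S - l i) - a := by
      rw [Finset.sum_erase_eq_sub hmem, h1, ← ha]
    have hcard : ((Finset.univ.erase i).erase i0).card = n - 2 := by
      rw [Finset.card_erase_of_mem hmem, Finset.card_erase_of_mem (Finset.mem_univ i),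
        Finset.card_univ, Fintype.card_fin]
      omega
    have h3 := Finset.card_nsmul_le_sum ((Finset.univ.erase i).erase i0) l (-K)
      (fun j _ => hlK j)
    rw [hcard, h2, nsmul_eq_mul, hcast2] at h3
    linarith
  have hS_ub : S ≤ (n:ℝ) * a := by
    have h := Finset.sum_le_card_nsmul Finset.univ l a (fun i _ => hl0 i)
    rw [Finset.card_univ, Fintype.card_fin, nsmul_eq_mul, ← hSdef] at h
    exact h
  have haK : ((n:ℝ)-2)*K ≤ a := by
    have := sigma2_aux_nK (n:ℝ) K M hnR hK
    nlinarith [hK.le, hnR]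
  -- bound on the second eigenvalue
  have hmem1 : i1 ∈ Finset.univ.erase i0 := by
    refine Finset.mem_erase.2 ⟨?_, Finset.mem_univ _⟩
    simp [hi0, hi1, Fin.ext_iff]
  have hg0 : ∑ i ∈ Finset.univ.erase i0, (l i * (S - l i)) = 2 - a*(S - a) := by
    rw [Finset.sum_erase_eq_sub (Finset.mem_univ i0), hkey, ← ha]
  have hg1 : ∑ i ∈ (Finset.univ.erase i0).erase i1, (l i * (S - l i))
      = 2 - a*(S - a) - l i1 * (S - l i1) := by
    rw [Finset.sum_erase_eq_sub hmem1, hg0]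
  have hcard2 : ((Finset.univ.erase i0).erase i1).card = n - 2 := by
    rw [Finset.card_erase_of_mem hmem1, hcard1]
    omega
  have hterm : ∀ i ∈ (Finset.univ.erase i0).erase i1, -(K*(S+K)) ≤ l i * (S - l i) := by
    intro i hi
    have hii0 : i ≠ i0 := (Finset.mem_erase.1 (Finset.mem_erase.1 hi).2).1
    have hsubi := hsub i hii0
    refine sigma2_aux_term K S (l i) hK hpos (hlK i) ?_
    rcases le_or_gt (l i) 0 with h | h
    · exact Or.inl h
    · exact Or.inr (by linarith)
  have hl1M : l i1 ≤ M := by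
    by_contra hcon
    push_neg at hcon
    have hbig := Finset.card_nsmul_le_sum _ _ _ hterm
    rw [hcard2, hg1, nsmul_eq_mul, hcast2] at hbig
    exact sigma2_aux_contr (n:ℝ) K M a S (l i1) hnR hK hM2 hMK hMkey hΛ hpos hS_ub hs_lb
      (hsub i1 (by simp [hi0, hi1, Fin.ext_iff])) hcon hbig
  have hli : ∀ i : Fin n, i ≠ i0 → l i ≤ M := fun i hi => le_trans (hl1 i hi) hl1M
  have hliabs : ∀ i ∈ Finset.univ.erase i0, -M ≤ l i ∧ l i ≤ M := by
    intro i hi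
    exact ⟨by linarith [hlK i, hMK], hli i (Finset.mem_erase.1 hi).1⟩
  have hs_ub : S - a ≤ ((n:ℝ)-1)*M := by
    have h := Finset.sum_le_card_nsmul (Finset.univ.erase i0) l M
      (fun i hi => (hliabs i hi).2)
    rw [hcard1, hsum_erase, nsmul_eq_mul, hcast1] at h
    exact h
  have ht_nonneg : 0 ≤ T - a^2 := by
    rw [← hsq_erase]; positivity
  have ht_ub : T - a^2 ≤ ((n:ℝ)-1)*M^2 := by
    have h := Finset.sum_le_card_nsmul (Finset.univ.erase i0) (fun i => (l i)^2) (M^2)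
      (fun i hi => by show (l i)^2 ≤ M^2; nlinarith [(hliabs i hi).1, (hliabs i hi).2])
    rw [hcard1, nsmul_eq_mul, hcast1] at h
    rw [← hsq_erase]
    exact h
  have hmain : 2*a*(S-a) + (S-a)^2 - (T - a^2) = 2 := by linear_combination hST
  constructor
  · exact sigma2_aux_low (n:ℝ) K M a S (T - a^2) hnR hK hM2 hMK hΛ hs_lb hs_ub
      ht_nonneg ht_ub hmain
  · intro k hk
    have hki0 : k ≠ i0 := by
      simp only [hi0, Fin.ext_iff, ne_eq]; omega
    exact sigma2_aux_part2 (n:ℝ) K M a S (l k) hnR hK hM2 hMK hΛ hs_lb hs_ub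
      (by linarith [hlK k, hMK]) (hli k hki0)
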